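/- Let G = ⟨a, b ∣ a² = b², a⁴ = b⁴ = (ab)³ = 1⟩. Then G has order 12, ab has order 3, and a has order 4; in particular the order of ab (namely 3) is not equal to half the order of G. -/

import Mathlib

/-- The defining relations of `G = ⟨a, b ∣ a² = b², a⁴ = b⁴ = (ab)³ = 1⟩`,
as elements of the free group on two generators `a = of 0`, `b = of 1`. -/
def bdRels : Set (FreeGroup (Fin 2)) :=
  {FreeGroup.of 0 ^ 2 * (FreeGroup.of 1 ^ 2)⁻¹,
   FreeGroup.of 0 ^ 4, FreeGroup.of 1 ^ 4,
   (FreeGroup.of 0 * FreeGroup.of 1) ^ 3}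

namespace BD

abbrev G := PresentedGroup bdRels
abbrev Q := QuaternionGroup 3

def fmap : Fin 2 → Q := ![QuaternionGroup.xa 0, QuaternionGroup.xa 1]

lemma frels : ∀ x ∈ bdRels, FreeGroup.lift fmap x = 1 := by
  intro x hx
  simp only [bdRels, Set.mem_insert_iff, Set.mem_singleton_iff] at hx
  rcases hx with rfl | rfl | rfl | rfl <;>
    simp only [map_mul, map_pow, map_inv, FreeGroup.lift_apply_of, fmap,
      Matrix.cons_val_zero, Matrix.cons_val_one, Matrix.head_cons] <;> decide

def f : G →* Q := PresentedGroup.toGroup frels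

lemma rel_one (x : FreeGroup (Fin 2)) (hx : x ∈ bdRels) : PresentedGroup.mk bdRels x = 1 := by
  rw [show (1 : G) = PresentedGroup.mk bdRels 1 from rfl]
  exact (QuotientGroup.eq_one_iff _).2 (Subgroup.subset_normalClosure hx)

local notation "α" => (PresentedGroup.of 0 : G)
local notation "β" => (PresentedGroup.of 1 : G)

lemma h1 : α ^ 2 = β ^ 2 := by
  have := rel_one _ (by simp [bdRels] : FreeGroup.of 0 ^ 2 * (FreeGroup.of 1 ^ 2)⁻¹ ∈ bdRels)
  simp only [map_mul, map_pow, map_inv] at this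
  rw [mul_inv_eq_one] at this
  exact this

lemma h2 : α ^ 4 = 1 := by
  have := rel_one _ (by simp [bdRels] : FreeGroup.of 0 ^ 4 ∈ bdRels)
  simp only [map_pow] at this
  exact this

lemma h3 : (α * β) ^ 3 = 1 := by
  have := rel_one _ (by simp [bdRels] : (FreeGroup.of 0 * FreeGroup.of 1) ^ 3 ∈ bdRels)
  simp only [map_mul, map_pow] at this
  exact this

lemma hba : β * α⁻¹ = β⁻¹ * α := by
  calc β * α⁻¹ = β⁻¹ * β ^ 2 * α⁻¹ := by group
    _ = β⁻¹ * α ^ 2 * α⁻¹ := by rw [h1]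
    _ = β⁻¹ * α := by group

lemma hconj : α * (α⁻¹ * β) * α⁻¹ = (α⁻¹ * β)⁻¹ := by
  calc α * (α⁻¹ * β) * α⁻¹ = β * α⁻¹ := by group
    _ = β⁻¹ * α := hba
    _ = (α⁻¹ * β)⁻¹ := by group

lemma hzb : α ^ 2 * β = β * α ^ 2 := by rw [h1]; group

lemma hcomm : Commute (α ^ 2) (α⁻¹ * β) := by
  unfold Commute SemiconjBy
  calc α ^ 2 * (α⁻¹ * β) = α⁻¹ * (α ^ 2 * β) := by group
    _ = α⁻¹ * (β * α ^ 2) := by rw [hzb]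
    _ = α⁻¹ * β * α ^ 2 := by group

lemma hr3 : (α⁻¹ * β) ^ 3 = α ^ 2 := by
  have key : α ^ 2 * (α⁻¹ * β) ^ 3 = 1 := by
    have h := h3
    rw [show α * β = α ^ 2 * (α⁻¹ * β) by group, hcomm.mul_pow] at h
    calc α ^ 2 * (α⁻¹ * β) ^ 3 = (α ^ 4)⁻¹ * ((α ^ 2) ^ 3 * (α⁻¹ * β) ^ 3) := by group
      _ = 1 := by rw [h2, h]; group
  have e : (α⁻¹ * β) ^ 3 = (α ^ 2)⁻¹ := eq_inv_of_mul_eq_one_right (by rw [← key])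
  rw [e, inv_eq_iff_mul_eq_one, ← pow_add]
  exact h2

lemma hr6 : (α⁻¹ * β) ^ 6 = 1 := by
  have : (α⁻¹ * β) ^ 6 = ((α⁻¹ * β) ^ 3) ^ 2 := by group
  rw [this, hr3, ← pow_mul]
  exact h2

noncomputable def rmap : ZMod 6 →+ Additive G :=
  ZMod.lift 6 ⟨(zmultiplesHom (Additive G)) (Additive.ofMul (α⁻¹ * β)), by
    show ((6 : ℤ) • Additive.ofMul (α⁻¹ * β)) = 0
    rw [← ofMul_zpow, show ((α⁻¹ * β) ^ (6:ℤ)) = (α⁻¹ * β) ^ (6:ℕ) by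
      rw [show ((6:ℤ)) = ((6:ℕ):ℤ) by norm_num, zpow_natCast], hr6, ofMul_one]⟩

noncomputable def R : ZMod 6 → G := fun i => Additive.toMul (rmap i)

lemma R_add (i j : ZMod 6) : R (i + j) = R i * R j := by
  simp only [R, map_add]; rfl

lemma R_intCast (m : ℤ) : R ((m : ℤ) : ZMod 6) = (α⁻¹ * β) ^ m := by
  simp only [R, rmap, ZMod.lift_coe]
  rfl

lemma R_zero : R 0 = 1 := by
  have : ((0 : ℤ) : ZMod 6) = 0 := by norm_num
  rw [← this, R_intCast, zpow_zero]

lemma R_one : R 1 = α⁻¹ * β := by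
  have : ((1 : ℤ) : ZMod 6) = 1 := by norm_num
  rw [← this, R_intCast, zpow_one]

lemma R_three : R 3 = α ^ 2 := by
  have : ((3 : ℤ) : ZMod 6) = 3 := by norm_num
  rw [← this, R_intCast, show ((α⁻¹ * β) ^ (3:ℤ)) = (α⁻¹ * β) ^ (3:ℕ) by
    rw [show ((3:ℤ)) = ((3:ℕ):ℤ) by norm_num, zpow_natCast], hr3]

lemma sR (i : ZMod 6) : α * R i = R (-i) * α := by
  have hi : ((ZMod.cast i : ℤ) : ZMod 6) = i := ZMod.intCast_zmod_cast i
  rw [← hi, ← Int.cast_neg, R_intCast, R_intCast]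
  have := conj_zpow (i := (ZMod.cast i : ℤ)) (a := α) (b := α⁻¹ * β)
  rw [hconj] at this
  rw [inv_zpow, ← zpow_neg] at this
  calc α * (α⁻¹ * β) ^ (ZMod.cast i : ℤ)
      = (α * (α⁻¹ * β) ^ (ZMod.cast i : ℤ) * α⁻¹) * α := by group
    _ = (α⁻¹ * β) ^ (-(ZMod.cast i : ℤ)) * α := by rw [← this]

open QuaternionGroup in
noncomputable def ghom : Q →* G where
  toFun x := match x with
    | .a i => R i
    | .xa i => α * R i
  map_one' := by
    show R 0 = 1
    exact R_zero
  map_mul' := by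
    rintro (i | i) (j | j)
    · show R (i + j) = R i * R j
      exact R_add i j
    · show α * R (j - i) = R i * (α * R j)
      have h := sR (-i)
      rw [neg_neg] at h
      rw [← mul_assoc, ← h, mul_assoc, ← R_add, neg_add_eq_sub]
    · show α * R (i + j) = α * R i * R j
      rw [R_add, mul_assoc]
    · show R ((3 : ZMod (2*3)) + j - i) = (α * R i) * (α * R j)
      have h := sR (-i)
      rw [neg_neg] at h
      symm
      calc (α * R i) * (α * R j) = α * (R i * α) * R j := by group
        _ = α * (α * R (-i)) * R j := by rw [← h]
        _ = (α * α) * (R (-i) * R j) := by group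
        _ = R 3 * R (-i + j) := by rw [← R_add, R_three, pow_two]
        _ = R (3 + (-i + j)) := (R_add _ _).symm
        _ = R ((3 : ZMod (2*3)) + j - i) := by congr 1; ring

lemma f_of_zero : f α = QuaternionGroup.xa 0 := PresentedGroup.toGroup.of frels
lemma f_of_one : f β = QuaternionGroup.xa 1 := PresentedGroup.toGroup.of frels

lemma gf : ghom.comp f = MonoidHom.id G := by
  apply PresentedGroup.ext
  intro x
  fin_cases x
  · show ghom (f α) = α
    rw [f_of_zero]
    show α * R 0 = α
    rw [R_zero, mul_one]
  · show ghom (f β) = β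
    rw [f_of_one]
    show α * R 1 = β
    rw [R_one]
    group

open QuaternionGroup in
lemma a_one_zpow (m : ℤ) : (a 1 : Q) ^ m = a (m : ZMod (2*3)) := by
  cases m with
  | ofNat k =>
    rw [Int.ofNat_eq_coe, zpow_natCast, a_one_pow]
    norm_cast
  | negSucc k =>
    rw [zpow_negSucc, a_one_pow]
    have : (a ((k+1 : ℕ) : ZMod (2*3)) : Q)⁻¹ = a (-((k+1 : ℕ) : ZMod (2*3))) := by
      apply inv_eq_of_mul_eq_one_right
      rw [a_mul_a, add_neg_cancel, one_def]
    rw [this]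
    congr 1

open QuaternionGroup in
lemma f_R (i : ZMod 6) : f (R i) = a i := by
  have hi : ((ZMod.cast i : ℤ) : ZMod 6) = i := ZMod.intCast_zmod_cast i
  rw [← hi, R_intCast, map_zpow]
  have hfr : f (α⁻¹ * β) = a 1 := by
    rw [map_mul, map_inv, f_of_zero, f_of_one]
    decide
  rw [hfr, a_one_zpow, hi]

open QuaternionGroup in
lemma fg : ∀ q : Q, f (ghom q) = q := by
  rintro (i | i)
  · show f (R i) = a i
    exact f_R i
  · show f (α * R i) = xa i
    rw [map_mul, f_of_zero, f_R, xa_mul_a, zero_add]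

lemma f_bij : Function.Bijective f := by
  constructor
  · intro x y hxy
    have := congrArg ghom hxy
    calc x = ghom.comp f x := by rw [gf]; rfl
      _ = ghom.comp f y := this
      _ = y := by rw [gf]; rfl
  · intro q
    exact ⟨ghom q, fg q⟩

end BD

/-- The group `G = ⟨a, b ∣ a² = b², a⁴ = b⁴ = (ab)³ = 1⟩` has order 12, `ab` has
order 3, `a` has order 4, and in particular the order of `ab` is not half the
order of `G`. -/
theorem stmt_17 :
    Nat.card (PresentedGroup bdRels) = 12 ∧
    orderOf ((PresentedGroup.of 0 : PresentedGroup bdRels) * PresentedGroup.of 1) = 3 ∧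
    orderOf (PresentedGroup.of 0 : PresentedGroup bdRels) = 4 ∧
    orderOf ((PresentedGroup.of 0 : PresentedGroup bdRels) * PresentedGroup.of 1) ≠
      Nat.card (PresentedGroup bdRels) / 2 := by
  have hcard : Nat.card (PresentedGroup bdRels) = 12 := by
    rw [Nat.card_eq_of_bijective _ BD.f_bij, Nat.card_eq_fintype_card, QuaternionGroup.card]
  have hab : orderOf ((PresentedGroup.of 0 : PresentedGroup bdRels) * PresentedGroup.of 1) = 3 := by
    rw [← orderOf_injective BD.f BD.f_bij.injective]
    rw [map_mul, BD.f_of_zero, BD.f_of_one]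
    rw [show (QuaternionGroup.xa 0 * QuaternionGroup.xa 1 : BD.Q) = QuaternionGroup.a 4 by decide]
    rw [QuaternionGroup.orderOf_a]
    decide
  have ha : orderOf (PresentedGroup.of 0 : PresentedGroup bdRels) = 4 := by
    rw [← orderOf_injective BD.f BD.f_bij.injective, BD.f_of_zero, QuaternionGroup.orderOf_xa]
  refine ⟨hcard, hab, ha, ?_⟩
  rw [hab, hcard]
  decide
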